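/- arXiv:0810.0650 — 2 statements merged into one kernel-verified Lean document; each statement's English description precedes it below -/
import Mathlib

section
/- Let $(U_1,\dots,U_n)$ have the Dirichlet (order-statistics) law on $[0,t]$, i.e., density $\frac{n!}{t^n}\mathbf{1}_{\{0<x_1<\cdots<x_n<t\}}$. Define $R_n=2\sum_{i=1}^n(-1)^{i+1}U_i$. Then for $n=2k$ ($k\ge1$), $R_{2k}+t$ has density $\frac{(2k-1)!}{2^{2k-1}((k-1)!)^2}\frac{(t+x)^k(t-x)^{k-1}}{t^{2k}}\mathbf{1}_{[-t,t]}(x)$, and for $n=2k+1$ ($k\ge0$), $R_{2k+1}-t$ has density $\frac{(2k+1)!}{2^{2k+1}(k!)^2}\frac{(t+x)^k(t-x)^k}{t^{2k+1}}\mathbf{1}_{[-t,t]}(x)$. -/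
open MeasureTheory ProbabilityTheory Real Set

noncomputable section

/-- The Dirichlet (uniform order statistics) law on `[0, t]`: the law with density
`n!/tⁿ · 1_{0 < x₁ < ⋯ < xₙ < t}` with respect to Lebesgue measure on `Fin n → ℝ`. -/
def dirichletLaw (n : ℕ) (t : ℝ) : Measure (Fin n → ℝ) :=
  (volume : Measure (Fin n → ℝ)).withDensity fun x =>
    ENNReal.ofReal (if StrictMono x ∧ ∀ i, x i ∈ Set.Ioo 0 t then (n.factorial : ℝ) / t ^ n else 0)

/-- The alternating sum `Rₙ = 2∑_{i=1}^n (-1)^{i+1} Uᵢ` (for a `Fin n`-indexed family,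
the sign of the `i`-th coordinate, `0`-based, is `(-1)^i`). -/
def altSum {Ω : Type*} (n : ℕ) (U : Ω → Fin n → ℝ) (ω : Ω) : ℝ :=
  2 * ∑ i : Fin n, (-1 : ℝ) ^ (i : ℕ) * U ω i

namespace DirichletAux

open scoped ENNReal

/-- alternating sum with signs `(-1)^i` -/
def asum {m : ℕ} (x : Fin m → ℝ) : ℝ := ∑ i : Fin m, (-1 : ℝ) ^ (i : ℕ) * x i

lemma measurable_asum (m : ℕ) : Measurable (asum (m := m)) :=
  Finset.measurable_sum _ fun i _ => (measurable_pi_apply i).const_mul _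

lemma asum_cons {m : ℕ} (u : ℝ) (y : Fin m → ℝ) : asum (Fin.cons u y) = u - asum y := by
  unfold asum
  rw [Fin.sum_univ_succ]
  have h : ∀ i : Fin m, (-1 : ℝ) ^ ((i.succ : Fin (m+1)) : ℕ) * (Fin.cons u y : Fin (m+1) → ℝ) i.succ
      = -((-1 : ℝ) ^ (i : ℕ) * y i) := by
    intro i
    rw [Fin.cons_succ, Fin.val_succ, pow_succ]
    ring
  rw [Finset.sum_congr rfl fun i _ => h i, Finset.sum_neg_distrib]
  simp [sub_eq_add_neg]

lemma asum_add_const {m : ℕ} (z : Fin m → ℝ) (u : ℝ) :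
    asum (fun i => z i + u) = asum z + (if Even m then 0 else 1) * u := by
  unfold asum
  simp only [mul_add, Finset.sum_add_distrib]
  congr 1
  rw [← Finset.sum_mul]
  congr 1
  rw [Fin.sum_univ_eq_sum_range (fun i => (-1 : ℝ) ^ i), neg_one_geom_sum]

/-- the unnormalized density of the alternating sum of `2k+1` ordered points in `(0,s)` -/
def oddDen (k : ℕ) (s y : ℝ) : ℝ :=
  if 0 < y ∧ y < s then y ^ k * (s - y) ^ k / ((k.factorial : ℝ) * k.factorial) else 0

/-- the unnormalized density of the alternating sum of `2k` ordered points in `(0,s)` (`k ≥ 1`) -/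
def evenDen (k : ℕ) (s y : ℝ) : ℝ :=
  if -s < y ∧ y < 0 then
    (-y) ^ (k - 1) * (s + y) ^ k / (((k - 1).factorial : ℝ) * k.factorial) else 0

lemma measurable_oddDen (k : ℕ) (s : ℝ) : Measurable (oddDen k s) := by
  unfold oddDen
  refine Measurable.ite ?_ (by fun_prop) measurable_const
  exact (measurableSet_lt measurable_const measurable_id).inter
    (measurableSet_lt measurable_id measurable_const)

lemma measurable_evenDen (k : ℕ) (s : ℝ) : Measurable (evenDen k s) := by
  unfold evenDen
  refine Measurable.ite ?_ (by fun_prop) measurable_const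
  exact (measurableSet_lt measurable_const measurable_id).inter
    (measurableSet_lt measurable_id measurable_const)

lemma measurable_oddDen2 (k : ℕ) : Measurable (fun p : ℝ × ℝ => oddDen k p.1 p.2) := by
  unfold oddDen
  refine Measurable.ite ?_ (by fun_prop) measurable_const
  exact (measurableSet_lt measurable_const measurable_snd).inter
    (measurableSet_lt measurable_snd measurable_fst)

lemma measurable_evenDen2 (k : ℕ) : Measurable (fun p : ℝ × ℝ => evenDen k p.1 p.2) := by
  unfold evenDen
  refine Measurable.ite ?_ (by fun_prop) measurable_const
  exact (measurableSet_lt measurable_fst.neg measurable_snd).inter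
    (measurableSet_lt measurable_snd measurable_const)

lemma measurableSet_cond (m : ℕ) (s : ℝ) :
    MeasurableSet {x : Fin m → ℝ | StrictMono x ∧ ∀ i, x i ∈ Ioo 0 s} := by
  have h1 : {x : Fin m → ℝ | StrictMono x ∧ ∀ i, x i ∈ Ioo 0 s}
      = (⋂ (i : Fin m) (j : Fin m) (_ : i < j), {x : Fin m → ℝ | x i < x j})
        ∩ ⋂ (i : Fin m), {x : Fin m → ℝ | x i ∈ Ioo 0 s} := by
    ext x
    constructor
    · rintro ⟨h1, h2⟩
      exact ⟨by simpa [mem_iInter] using fun i j hij => h1 hij, by simpa [mem_iInter] using h2⟩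
    · rintro ⟨h1, h2⟩
      simp only [mem_iInter, mem_setOf_eq] at h1 h2
      exact ⟨fun i j hij => h1 i j hij, h2⟩
  rw [h1]
  refine MeasurableSet.inter ?_ ?_
  · exact MeasurableSet.iInter fun i => MeasurableSet.iInter fun j => MeasurableSet.iInter
      fun _ => measurableSet_lt (measurable_pi_apply i) (measurable_pi_apply j)
  · exact MeasurableSet.iInter fun i => (measurable_pi_apply i) measurableSet_Ioo

lemma cond_cons {m : ℕ} {s : ℝ} (u : ℝ) (y : Fin m → ℝ) :
    (StrictMono (Fin.cons u y : Fin (m+1) → ℝ) ∧ ∀ i, (Fin.cons u y : Fin (m+1) → ℝ) i ∈ Ioo 0 s)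
      ↔ ((0 < u ∧ u < s) ∧ (StrictMono y ∧ ∀ i, y i ∈ Ioo u s)) := by
  constructor
  · rintro ⟨hm, hmem⟩
    have h0 := hmem 0
    rw [Fin.cons_zero] at h0
    have hsm : StrictMono y := by
      intro i j hij
      have := hm (show (i.succ : Fin (m+1)) < j.succ from Fin.succ_lt_succ_iff.2 hij)
      simpa using this
    have hymem : ∀ i, y i ∈ Ioo u s := by
      intro i
      have h1 := hm (Fin.succ_pos i)
      have h2 := hmem i.succ
      rw [Fin.cons_succ] at h2
      rw [Fin.cons_zero, Fin.cons_succ] at h1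
      exact ⟨h1, h2.2⟩
    exact ⟨⟨h0.1, h0.2⟩, hsm, hymem⟩
  · rintro ⟨⟨hu0, hus⟩, hm, hmem⟩
    refine ⟨?_, fun i => ?_⟩
    · intro a b hab
      induction b using Fin.cases with
      | zero => exact absurd hab (Fin.not_lt_zero _)
      | succ b =>
        induction a using Fin.cases with
        | zero => simpa using (hmem b).1
        | succ a => simpa using hm (Fin.succ_lt_succ_iff.1 hab)
    · induction i using Fin.cases with
      | zero => exact ⟨hu0, hus⟩
      | succ i => exact ⟨lt_trans hu0 (hmem i).1, (hmem i).2⟩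



lemma lintegral_fin_succ {m : ℕ} (F : (Fin (m+1) → ℝ) → ℝ≥0∞) (hF : Measurable F) :
    ∫⁻ x, F x = ∫⁻ u : ℝ, ∫⁻ y : Fin m → ℝ, F (Fin.cons u y) := by
  have hmp := (volume_preserving_piFinSuccAbove (fun _ : Fin (m+1) => ℝ) 0).symm
  rw [← hmp.lintegral_comp (f := F) hF]
  have hFm : AEMeasurable (fun a : ℝ × (Fin m → ℝ) =>
      F ((MeasurableEquiv.piFinSuccAbove (fun _ : Fin (m+1) => ℝ) 0).symm a))
      ((volume : Measure ℝ).prod volume) :=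
    (hF.comp (MeasurableEquiv.measurable _)).aemeasurable
  rw [Measure.volume_eq_prod, lintegral_prod _ hFm]
  refine lintegral_congr fun u => lintegral_congr fun y => ?_
  congr 1
  show (MeasurableEquiv.piFinSuccAbove (fun _ : Fin (m+1) => ℝ) 0).symm (u, y) = Fin.cons u y
  simp only [MeasurableEquiv.piFinSuccAbove_symm_apply]
  exact Fin.insertNth_zero' u y

lemma lintegral_neg_real (g : ℝ → ℝ≥0∞) : ∫⁻ x : ℝ, g (-x) = ∫⁻ x, g x := by
  have h := (Measure.measurePreserving_neg (volume : Measure ℝ)).lintegral_comp_emb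
    (MeasurableEquiv.neg ℝ).measurableEmbedding g
  exact h

lemma lintegral_sub_left_real (g : ℝ → ℝ≥0∞) (u : ℝ) : ∫⁻ x : ℝ, g (u - x) = ∫⁻ x, g x := by
  have h1 : ∀ x : ℝ, g (u - x) = (fun w => g (u + w)) (-x) := by
    intro x; simp [sub_eq_add_neg]
  simp only [h1]
  rw [lintegral_neg_real (fun w => g (u + w))]
  exact lintegral_add_left_eq_self (fun w => g w) u

lemma key1d (j : ℕ) (b c : ℝ) (hb : 0 < b) (hc : 0 ≤ c) :
    ∫⁻ u : ℝ, ENNReal.ofReal (if 0 < u ∧ u < b then c * (b - u) ^ j else 0)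
      = ENNReal.ofReal (c * b ^ (j+1) / (j+1)) := by
  have h1 : ∀ u : ℝ, ENNReal.ofReal (if 0 < u ∧ u < b then c * (b - u) ^ j else 0)
      = (Ioo (0:ℝ) b).indicator (fun u => ENNReal.ofReal (c * (b - u) ^ j)) u := by
    intro u
    by_cases h : u ∈ Ioo (0:ℝ) b
    · rw [indicator_of_mem h, if_pos ⟨h.1, h.2⟩]
    · rw [indicator_of_notMem h, if_neg (fun hc' => h ⟨hc'.1, hc'.2⟩), ENNReal.ofReal_zero]
  rw [lintegral_congr h1, lintegral_indicator measurableSet_Ioo]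
  have hint : IntegrableOn (fun u : ℝ => c * (b - u) ^ j) (Ioo 0 b) :=
    ((Continuous.integrableOn_Icc (by continuity))).mono_set Ioo_subset_Icc_self
  have hnn : 0 ≤ᵐ[volume.restrict (Ioo (0:ℝ) b)] fun u : ℝ => c * (b - u) ^ j := by
    refine (ae_restrict_iff' measurableSet_Ioo).2 (ae_of_all _ fun u hu => ?_)
    exact mul_nonneg hc (pow_nonneg (by linarith [hu.2]) j)
  rw [← ofReal_integral_eq_lintegral_ofReal hint hnn]
  congr 1
  rw [← integral_Ioc_eq_integral_Ioo, ← intervalIntegral.integral_of_le hb.le]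
  rw [intervalIntegral.integral_const_mul]
  have h2 : (∫ u in (0:ℝ)..b, (b - u) ^ j) = ∫ x in (b - b)..(b - 0), x ^ j :=
    intervalIntegral.integral_comp_sub_left (fun x => x ^ j) b
  rw [h2]
  rw [sub_self, sub_zero, integral_pow]
  rw [zero_pow (Nat.succ_ne_zero j)]
  push_cast
  ring

lemma lintegral_comp_two_mul_add (G : ℝ → ℝ≥0∞) (hG : Measurable G) (b : ℝ) :
    ∫⁻ y : ℝ, G (2*y + b) = ENNReal.ofReal (1/2) * ∫⁻ x, G x := by
  have h2 : ∫⁻ y : ℝ, G (2*y + b)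
      = ∫⁻ x, (fun w => G (w + b)) x ∂(Measure.map (fun y : ℝ => 2 * y) volume) := by
    rw [lintegral_map (show Measurable (fun w => G (w + b)) from hG.comp (measurable_add_const b)) (measurable_const_mul 2)]
  rw [h2, show (fun y : ℝ => 2 * y) = (2 * ·) from rfl, Real.map_volume_mul_left (two_ne_zero)]
  rw [lintegral_smul_measure]
  rw [lintegral_add_right_eq_self (fun x => G x) b]
  norm_num [abs_of_pos]


lemma step (m : ℕ) (den : ℝ → ℝ → ℝ)
    (hden : Measurable fun p : ℝ × ℝ => den p.1 p.2)
    (IH : ∀ s : ℝ, 0 < s → ∀ f : ℝ → ℝ≥0∞, Measurable f →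
      (∫⁻ x : Fin m → ℝ, if StrictMono x ∧ ∀ i, x i ∈ Ioo 0 s then f (asum x) else 0)
        = ∫⁻ y : ℝ, ENNReal.ofReal (den s y) * f y)
    (s : ℝ) (hs : 0 < s) (f : ℝ → ℝ≥0∞) (hf : Measurable f) :
    (∫⁻ x : Fin (m+1) → ℝ, if StrictMono x ∧ ∀ i, x i ∈ Ioo 0 s then f (asum x) else 0)
      = ∫⁻ y : ℝ, (∫⁻ u : ℝ, ENNReal.ofReal
          (if 0 < u ∧ u < s then den (s - u) (if Even m then u - y else -y) else 0)) * f y := by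
  have hFmeas : Measurable (fun x : Fin (m+1) → ℝ =>
      if StrictMono x ∧ ∀ i, x i ∈ Ioo 0 s then f (asum x) else 0) :=
    Measurable.ite (measurableSet_cond _ _) (hf.comp (measurable_asum _)) measurable_const
  rw [lintegral_fin_succ _ hFmeas]
  have step1 : ∀ u : ℝ, (∫⁻ y : Fin m → ℝ,
      if StrictMono (Fin.cons u y : Fin (m+1) → ℝ)
          ∧ ∀ i, (Fin.cons u y : Fin (m+1) → ℝ) i ∈ Ioo 0 s
        then f (asum (Fin.cons u y)) else 0)
      = ∫⁻ y : ℝ, ENNReal.ofReal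
          (if 0 < u ∧ u < s then den (s - u) (if Even m then u - y else -y) else 0) * f y := by
    intro u
    by_cases hu : 0 < u ∧ u < s
    · have hcons : ∀ y : Fin m → ℝ,
          (if StrictMono (Fin.cons u y : Fin (m+1) → ℝ)
              ∧ ∀ i, (Fin.cons u y : Fin (m+1) → ℝ) i ∈ Ioo 0 s
            then f (asum (Fin.cons u y)) else 0)
          = if StrictMono y ∧ ∀ i, y i ∈ Ioo u s then f (u - asum y) else 0 := by
        intro y
        by_cases h : StrictMono y ∧ ∀ i, y i ∈ Ioo u s
        · rw [if_pos ((cond_cons u y).2 ⟨hu, h⟩), if_pos h, asum_cons]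
        · rw [if_neg (fun hc => h ((cond_cons u y).1 hc).2), if_neg h]
      rw [lintegral_congr hcons]
      have htrans : (∫⁻ y : Fin m → ℝ,
            if StrictMono y ∧ ∀ i, y i ∈ Ioo u s then f (u - asum y) else 0)
          = ∫⁻ z : Fin m → ℝ, (if StrictMono z ∧ ∀ i, z i ∈ Ioo 0 (s - u)
              then (fun w => f (u - (w + (if Even m then 0 else 1) * u))) (asum z) else 0) := by
        rw [← lintegral_add_right_eq_self (μ := (volume : Measure (Fin m → ℝ)))
          (fun y : Fin m → ℝ => if StrictMono y ∧ ∀ i, y i ∈ Ioo u s then f (u - asum y) else 0)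
          (fun _ => u)]
        refine lintegral_congr fun z => ?_
        have e1 : (StrictMono (z + fun _ => u) ∧ ∀ i : Fin m, (z + (fun _ => u) : Fin m → ℝ) i ∈ Ioo u s)
            ↔ (StrictMono z ∧ ∀ i, z i ∈ Ioo 0 (s - u)) := by
          constructor
          · rintro ⟨h1, h2⟩
            refine ⟨fun a b hab => by simpa using h1 hab, fun i => ?_⟩
            rcases h2 i with ⟨ha, hb⟩
            simp only [Pi.add_apply] at ha hb
            exact ⟨by linarith, by linarith⟩
          · rintro ⟨h1, h2⟩
            refine ⟨fun a b hab => by simpa using h1 hab, fun i => ?_⟩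
            rcases h2 i with ⟨ha, hb⟩
            simp only [Pi.add_apply]
            exact ⟨by linarith, by linarith⟩
        have e2 : asum (z + fun _ => u) = asum z + (if Even m then 0 else 1) * u := by
          have hz : (z + fun _ => u) = fun i => z i + u := rfl
          rw [hz, asum_add_const]
        by_cases h : StrictMono z ∧ ∀ i, z i ∈ Ioo 0 (s - u)
        · rw [if_pos (e1.2 h), if_pos h, e2]
        · rw [if_neg (fun hc => h (e1.1 hc)), if_neg h]
      rw [htrans, IH (s - u) (by linarith [hu.1, hu.2])
        (fun w => f (u - (w + (if Even m then 0 else 1) * u)))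
        (hf.comp (((measurable_id.add_const _).const_sub u)))]
      refine Eq.trans ?_ (lintegral_congr fun y : ℝ => by rw [if_pos hu]).symm
      by_cases hm : Even m
      · simp only [if_pos hm, zero_mul, add_zero]
        rw [← lintegral_sub_left_real
          (fun w => ENNReal.ofReal (den (s - u) w) * f (u - w)) u]
        refine lintegral_congr fun x => ?_
        simp only [sub_sub_cancel]
      · simp only [if_neg hm, one_mul]
        have harg : ∀ w : ℝ, u - (w + u) = -w := fun w => by ring
        simp only [harg]
        rw [← lintegral_neg_real (fun w => ENNReal.ofReal (den (s - u) w) * f (-w))]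
        refine lintegral_congr fun x => ?_
        simp only [neg_neg]
    · have hzero : ∀ y : Fin m → ℝ,
          (if StrictMono (Fin.cons u y : Fin (m+1) → ℝ)
              ∧ ∀ i, (Fin.cons u y : Fin (m+1) → ℝ) i ∈ Ioo 0 s
            then f (asum (Fin.cons u y)) else 0) = 0 :=
        fun y => if_neg (fun hc => hu ((cond_cons u y).1 hc).1)
      have hz2 : ∀ y : ℝ, ENNReal.ofReal
          (if 0 < u ∧ u < s then den (s - u) (if Even m then u - y else -y) else 0) * f y = 0 := by
        intro y; rw [if_neg hu, ENNReal.ofReal_zero, zero_mul]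
      rw [lintegral_congr hzero, lintegral_congr hz2, lintegral_zero, lintegral_zero]
  rw [lintegral_congr step1]
  have hKd : Measurable (fun p : ℝ × ℝ => ENNReal.ofReal
      (if 0 < p.1 ∧ p.1 < s then den (s - p.1) (if Even m then p.1 - p.2 else -p.2) else 0)) := by
    refine ENNReal.measurable_ofReal.comp ?_
    refine Measurable.ite ?_ ?_ measurable_const
    · exact (measurableSet_lt measurable_const measurable_fst).inter
        (measurableSet_lt measurable_fst measurable_const)
    · have hτ : Measurable (fun p : ℝ × ℝ => if Even m then p.1 - p.2 else -p.2) := by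
        by_cases hm : Even m
        · simp only [if_pos hm]; exact measurable_fst.sub measurable_snd
        · simp only [if_neg hm]; exact measurable_snd.neg
      exact hden.comp (Measurable.prodMk (measurable_const.sub measurable_fst) hτ)
  have hK : Measurable (fun p : ℝ × ℝ => ENNReal.ofReal
      (if 0 < p.1 ∧ p.1 < s then den (s - p.1) (if Even m then p.1 - p.2 else -p.2) else 0)
        * f p.2) := hKd.mul (hf.comp measurable_snd)
  rw [lintegral_lintegral_swap hK.aemeasurable]
  refine lintegral_congr fun y => ?_
  exact lintegral_mul_const _ (hKd.comp (measurable_id.prodMk measurable_const))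


lemma oddDen_int (k : ℕ) (s : ℝ) (hs : 0 < s) (y : ℝ) :
    (∫⁻ u : ℝ, ENNReal.ofReal (if 0 < u ∧ u < s then evenDen (k+1) (s - u) (u - y) else 0))
      = ENNReal.ofReal (oddDen (k+1) s y) := by
  by_cases hy : 0 < y ∧ y < s
  · have hval : ∀ u : ℝ, (if 0 < u ∧ u < s then evenDen (k+1) (s - u) (u - y) else 0)
        = if 0 < u ∧ u < y then
            ((s - y) ^ (k+1) / ((k.factorial : ℝ) * (k+1).factorial)) * (y - u) ^ k else 0 := by
      intro u
      unfold evenDen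
      by_cases hu : 0 < u ∧ u < y
      · rw [if_pos ⟨hu.1, lt_trans hu.2 hy.2⟩, if_pos (by constructor <;> linarith [hu.1, hu.2, hy.2]), if_pos hu]
        have e1 : -(u - y) = y - u := by ring
        have e2 : s - u + (u - y) = s - y := by ring
        rw [e1, e2]
        simp only [Nat.add_sub_cancel]
        ring
      · rw [if_neg hu]
        by_cases hu' : 0 < u ∧ u < s
        · rw [if_pos hu', if_neg]
          rintro ⟨h1, h2⟩
          exact hu ⟨hu'.1, by linarith⟩
        · rw [if_neg hu']
    rw [lintegral_congr fun u => by rw [hval u]]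
    rw [key1d k y _ hy.1 (div_nonneg (pow_nonneg (by linarith [hy.2]) _) (by positivity))]
    unfold oddDen
    rw [if_pos hy]
    congr 1
    have h1 : ((k+1).factorial : ℝ) = (k+1) * k.factorial := by
      exact_mod_cast Nat.factorial_succ k
    have h2 : (k.factorial : ℝ) ≠ 0 := Nat.cast_ne_zero.2 (Nat.factorial_ne_zero k)
    have h3 : ((k : ℝ) + 1) ≠ 0 := by positivity
    rw [h1]
    field_simp
  · have hval : ∀ u : ℝ, (if 0 < u ∧ u < s then evenDen (k+1) (s - u) (u - y) else 0) = 0 := by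
      intro u
      unfold evenDen
      by_cases hu : 0 < u ∧ u < s
      · rw [if_pos hu, if_neg]
        rintro ⟨h1, h2⟩
        exact hy ⟨by linarith [hu.1], by linarith⟩
      · rw [if_neg hu]
    rw [lintegral_congr fun u => by rw [hval u, ENNReal.ofReal_zero], lintegral_zero]
    unfold oddDen
    rw [if_neg hy, ENNReal.ofReal_zero]

lemma evenDen_int (k : ℕ) (s : ℝ) (hs : 0 < s) (y : ℝ) :
    (∫⁻ u : ℝ, ENNReal.ofReal (if 0 < u ∧ u < s then oddDen k (s - u) (-y) else 0))
      = ENNReal.ofReal (evenDen (k+1) s y) := by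
  by_cases hy : -s < y ∧ y < 0
  · have hval : ∀ u : ℝ, (if 0 < u ∧ u < s then oddDen k (s - u) (-y) else 0)
        = if 0 < u ∧ u < s + y then
            ((-y) ^ k / ((k.factorial : ℝ) * k.factorial)) * (s + y - u) ^ k else 0 := by
      intro u
      unfold oddDen
      by_cases hu : 0 < u ∧ u < s + y
      · rw [if_pos ⟨hu.1, by linarith [hu.2, hy.2]⟩, if_pos (by constructor <;> linarith [hu.2, hy.2]), if_pos hu]
        have e1 : s - u - -y = s + y - u := by ring
        rw [e1]
        ring
      · rw [if_neg hu]
        by_cases hu' : 0 < u ∧ u < s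
        · rw [if_pos hu', if_neg]
          rintro ⟨h1, h2⟩
          exact hu ⟨hu'.1, by linarith⟩
        · rw [if_neg hu']
    rw [lintegral_congr fun u => by rw [hval u]]
    rw [key1d k (s + y) _ (by linarith [hy.1]) (div_nonneg (pow_nonneg (by linarith [hy.2]) _) (by positivity))]
    unfold evenDen
    rw [if_pos hy]
    congr 1
    have h1 : ((k+1).factorial : ℝ) = (k+1) * k.factorial := by
      exact_mod_cast Nat.factorial_succ k
    have h2 : (k.factorial : ℝ) ≠ 0 := Nat.cast_ne_zero.2 (Nat.factorial_ne_zero k)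
    have h3 : ((k : ℝ) + 1) ≠ 0 := by positivity
    simp only [Nat.add_sub_cancel]
    rw [h1, div_mul_eq_mul_div, div_div]
    congr 1
    ring
  · have hval : ∀ u : ℝ, (if 0 < u ∧ u < s then oddDen k (s - u) (-y) else 0) = 0 := by
      intro u
      unfold oddDen
      by_cases hu : 0 < u ∧ u < s
      · rw [if_pos hu, if_neg]
        rintro ⟨h1, h2⟩
        exact hy ⟨by linarith [hu.1], by linarith⟩
      · rw [if_neg hu]
    rw [lintegral_congr fun u => by rw [hval u, ENNReal.ofReal_zero], lintegral_zero]
    unfold evenDen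
    rw [if_neg hy, ENNReal.ofReal_zero]

lemma core_base (s : ℝ) (hs : 0 < s) (f : ℝ → ℝ≥0∞) (hf : Measurable f) :
    (∫⁻ x : Fin 1 → ℝ, if StrictMono x ∧ ∀ i, x i ∈ Ioo 0 s then f (asum x) else 0)
      = ∫⁻ y : ℝ, ENNReal.ofReal (oddDen 0 s y) * f y := by
  have hFmeas : Measurable (fun x : Fin 1 → ℝ =>
      if StrictMono x ∧ ∀ i, x i ∈ Ioo 0 s then f (asum x) else 0) :=
    Measurable.ite (measurableSet_cond _ _) (hf.comp (measurable_asum _)) measurable_const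
  rw [lintegral_fin_succ _ hFmeas]
  have h1 : ∀ u : ℝ, ∀ y : Fin 0 → ℝ,
      (if StrictMono (Fin.cons u y : Fin 1 → ℝ) ∧ ∀ i, (Fin.cons u y : Fin 1 → ℝ) i ∈ Ioo 0 s
        then f (asum (Fin.cons u y)) else 0) = if 0 < u ∧ u < s then f u else 0 := by
    intro u y
    have h2 : StrictMono y := fun a => a.elim0
    have h3 : ∀ i : Fin 0, y i ∈ Ioo u s := fun i => i.elim0
    have h4 : asum (Fin.cons u y) = u := by
      rw [asum_cons]
      simp [asum]
    by_cases hu : 0 < u ∧ u < s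
    · rw [if_pos ((cond_cons u y).2 ⟨hu, h2, h3⟩), h4, if_pos hu]
    · rw [if_neg (fun hc => hu ((cond_cons u y).1 hc).1), if_neg hu]
  have h5 : ∀ u : ℝ, (∫⁻ y : Fin 0 → ℝ,
      if StrictMono (Fin.cons u y : Fin 1 → ℝ) ∧ ∀ i, (Fin.cons u y : Fin 1 → ℝ) i ∈ Ioo 0 s
        then f (asum (Fin.cons u y)) else 0) = if 0 < u ∧ u < s then f u else 0 := by
    intro u
    rw [lintegral_congr (h1 u), lintegral_const]
    have : (volume : Measure (Fin 0 → ℝ)) univ = 1 := by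
      rw [MeasureTheory.volume_pi, Measure.pi_univ]
      simp
    rw [this, mul_one]
  rw [lintegral_congr h5]
  refine lintegral_congr fun u => ?_
  unfold oddDen
  by_cases hu : 0 < u ∧ u < s
  · rw [if_pos hu, if_pos hu]
    norm_num
  · rw [if_neg hu, if_neg hu]
    rw [ENNReal.ofReal_zero, zero_mul]

lemma core (k : ℕ) :
    (∀ s : ℝ, 0 < s → ∀ f : ℝ → ℝ≥0∞, Measurable f →
      (∫⁻ x : Fin (2*k+1) → ℝ, if StrictMono x ∧ ∀ i, x i ∈ Ioo 0 s then f (asum x) else 0)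
        = ∫⁻ y : ℝ, ENNReal.ofReal (oddDen k s y) * f y) ∧
    (∀ s : ℝ, 0 < s → ∀ f : ℝ → ℝ≥0∞, Measurable f →
      (∫⁻ x : Fin (2*k+2) → ℝ, if StrictMono x ∧ ∀ i, x i ∈ Ioo 0 s then f (asum x) else 0)
        = ∫⁻ y : ℝ, ENNReal.ofReal (evenDen (k+1) s y) * f y) := by
  have stepA : ∀ k : ℕ,
      (∀ s : ℝ, 0 < s → ∀ f : ℝ → ℝ≥0∞, Measurable f →
        (∫⁻ x : Fin (2*k+1) → ℝ, if StrictMono x ∧ ∀ i, x i ∈ Ioo 0 s then f (asum x) else 0)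
          = ∫⁻ y : ℝ, ENNReal.ofReal (oddDen k s y) * f y) →
      (∀ s : ℝ, 0 < s → ∀ f : ℝ → ℝ≥0∞, Measurable f →
        (∫⁻ x : Fin (2*k+2) → ℝ, if StrictMono x ∧ ∀ i, x i ∈ Ioo 0 s then f (asum x) else 0)
          = ∫⁻ y : ℝ, ENNReal.ofReal (evenDen (k+1) s y) * f y) := by
    intro k hodd s hs f hf
    have h := step (2*k+1) (oddDen k) (measurable_oddDen2 k) hodd s hs f hf
    have hm : ¬ Even (2*k+1) := by
      simp [Nat.even_add_one, Nat.even_mul]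
    refine h.trans (lintegral_congr fun y => ?_)
    congr 1
    have h2 : ∀ u : ℝ, (if 0 < u ∧ u < s then oddDen k (s - u) (if Even (2*k+1) then u - y else -y) else 0)
        = if 0 < u ∧ u < s then oddDen k (s - u) (-y) else 0 := by
      intro u
      rw [if_neg hm]
    rw [lintegral_congr fun u => by rw [h2 u]]
    exact evenDen_int k s hs y
  have stepB : ∀ k : ℕ,
      (∀ s : ℝ, 0 < s → ∀ f : ℝ → ℝ≥0∞, Measurable f →
        (∫⁻ x : Fin (2*k+2) → ℝ, if StrictMono x ∧ ∀ i, x i ∈ Ioo 0 s then f (asum x) else 0)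
          = ∫⁻ y : ℝ, ENNReal.ofReal (evenDen (k+1) s y) * f y) →
      (∀ s : ℝ, 0 < s → ∀ f : ℝ → ℝ≥0∞, Measurable f →
        (∫⁻ x : Fin (2*(k+1)+1) → ℝ, if StrictMono x ∧ ∀ i, x i ∈ Ioo 0 s then f (asum x) else 0)
          = ∫⁻ y : ℝ, ENNReal.ofReal (oddDen (k+1) s y) * f y) := by
    intro k heven s hs f hf
    have h := step (2*k+2) (evenDen (k+1)) (measurable_evenDen2 (k+1)) heven s hs f hf
    have hm : Even (2*k+2) := by
      refine ⟨k+1, by ring⟩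
    refine h.trans (lintegral_congr fun y => ?_)
    congr 1
    have h2 : ∀ u : ℝ, (if 0 < u ∧ u < s then evenDen (k+1) (s - u) (if Even (2*k+2) then u - y else -y) else 0)
        = if 0 < u ∧ u < s then evenDen (k+1) (s - u) (u - y) else 0 := by
      intro u
      rw [if_pos hm]
    rw [lintegral_congr fun u => by rw [h2 u]]
    exact oddDen_int k s hs y
  induction k with
  | zero =>
    have hbase : ∀ s : ℝ, 0 < s → ∀ f : ℝ → ℝ≥0∞, Measurable f →
        (∫⁻ x : Fin (2*0+1) → ℝ, if StrictMono x ∧ ∀ i, x i ∈ Ioo 0 s then f (asum x) else 0)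
          = ∫⁻ y : ℝ, ENNReal.ofReal (oddDen 0 s y) * f y := fun s hs f hf => core_base s hs f hf
    exact ⟨hbase, stepA 0 hbase⟩
  | succ k ih =>
    have hodd := stepB k ih.2
    exact ⟨hodd, stepA (k+1) hodd⟩

lemma final_aux (n : ℕ) (t : ℝ) (ht : 0 < t) (b : ℝ) (den : ℝ → ℝ)
    (hden_meas : Measurable den)
    (hcore : ∀ f : ℝ → ℝ≥0∞, Measurable f →
      (∫⁻ x : Fin n → ℝ, if StrictMono x ∧ ∀ i, x i ∈ Ioo 0 t then f (asum x) else 0)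
        = ∫⁻ y : ℝ, ENNReal.ofReal (den y) * f y)
    (ρ : ℝ → ℝ)
    (hρ : ∀ᵐ x : ℝ, ENNReal.ofReal ((n.factorial : ℝ) / t ^ n) *
        (ENNReal.ofReal (1/2) * ENNReal.ofReal (den ((x - b)/2))) = ENNReal.ofReal (ρ x))
    {Ω : Type*} [MeasureSpace Ω] [IsProbabilityMeasure (ℙ : Measure Ω)]
    (U : Ω → Fin n → ℝ) (hU : Measurable U) (hlaw : Measure.map U ℙ = dirichletLaw n t) :
    Measure.map (fun ω => altSum n U ω + b) ℙ
      = (volume : Measure ℝ).withDensity (fun x => ENNReal.ofReal (ρ x)) := by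
  have hφ : Measurable (fun x : Fin n → ℝ => 2 * asum x + b) :=
    ((measurable_asum n).const_mul 2).add_const b
  have hcomp : (fun ω => altSum n U ω + b) = (fun x : Fin n → ℝ => 2 * asum x + b) ∘ U := rfl
  rw [hcomp, ← Measure.map_map hφ hU, hlaw]
  ext A hA
  rw [Measure.map_apply hφ hA, dirichletLaw, withDensity_apply _ (hφ hA), withDensity_apply _ hA]
  rw [← lintegral_indicator (hφ hA), ← lintegral_indicator hA]
  set c : ℝ := (n.factorial : ℝ) / t ^ n with hc
  have hf1 : Measurable (fun y : ℝ => ENNReal.ofReal c * A.indicator 1 (2 * y + b)) :=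
    measurable_const.mul ((measurable_one.indicator hA).comp
      ((measurable_id.const_mul 2).add_const b))
  have hL : ∀ x : Fin n → ℝ,
      ((fun x : Fin n → ℝ => 2 * asum x + b) ⁻¹' A).indicator
        (fun x => ENNReal.ofReal (if StrictMono x ∧ ∀ i, x i ∈ Ioo 0 t then c else 0)) x
      = if StrictMono x ∧ ∀ i, x i ∈ Ioo 0 t
          then (fun y : ℝ => ENNReal.ofReal c * A.indicator 1 (2 * y + b)) (asum x) else 0 := by
    intro x
    by_cases hcnd : StrictMono x ∧ ∀ i, x i ∈ Ioo 0 t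
    · rw [if_pos hcnd]
      show _ = ENNReal.ofReal c * A.indicator 1 (2 * asum x + b)
      by_cases hx : (2 * asum x + b) ∈ A
      · rw [indicator_of_mem (show x ∈ (fun x : Fin n → ℝ => 2 * asum x + b) ⁻¹' A from hx),
          if_pos hcnd, indicator_of_mem hx, Pi.one_apply, mul_one]
      · rw [indicator_of_notMem (show x ∉ (fun x : Fin n → ℝ => 2 * asum x + b) ⁻¹' A from hx),
          indicator_of_notMem hx, mul_zero]
    · rw [if_neg hcnd]
      by_cases hx : (2 * asum x + b) ∈ A
      · rw [indicator_of_mem (show x ∈ (fun x : Fin n → ℝ => 2 * asum x + b) ⁻¹' A from hx),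
          if_neg hcnd, ENNReal.ofReal_zero]
      · rw [indicator_of_notMem (show x ∉ (fun x : Fin n → ℝ => 2 * asum x + b) ⁻¹' A from hx)]
  rw [lintegral_congr hL, hcore _ hf1]
  set G : ℝ → ℝ≥0∞ := fun x => ENNReal.ofReal (den ((x - b)/2)) * A.indicator 1 x with hGdef
  have hG : Measurable G := by
    rw [hGdef]
    exact (ENNReal.measurable_ofReal.comp
      (hden_meas.comp ((measurable_id.sub_const b).div_const 2))).mul (measurable_one.indicator hA)
  have hre : ∀ y : ℝ, ENNReal.ofReal (den y) * (ENNReal.ofReal c * A.indicator 1 (2 * y + b))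
      = ENNReal.ofReal c * G (2 * y + b) := by
    intro y
    simp only [hGdef]
    have h2 : (2 * y + b - b)/2 = y := by ring
    rw [h2]
    ring
  rw [lintegral_congr hre,
    lintegral_const_mul _ (show Measurable (fun y : ℝ => G (2 * y + b)) from hG.comp ((measurable_id.const_mul 2).add_const b)),
    lintegral_comp_two_mul_add G hG b]
  have hpush : (∫⁻ x : ℝ, ENNReal.ofReal c * (ENNReal.ofReal (1/2) * G x))
      = ENNReal.ofReal c * (ENNReal.ofReal (1/2) * ∫⁻ x, G x) := by
    rw [lintegral_const_mul _ (show Measurable (fun x : ℝ => ENNReal.ofReal (1/2) * G x) from measurable_const.mul hG), lintegral_const_mul _ hG]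
  rw [← hpush]
  refine lintegral_congr_ae ?_
  filter_upwards [hρ] with x hx
  simp only [hGdef]
  by_cases hxA : x ∈ A
  · rw [indicator_of_mem hxA, indicator_of_mem hxA, Pi.one_apply, mul_one]
    exact hx
  · rw [indicator_of_notMem hxA, indicator_of_notMem hxA]
    simp

lemma ae_ne_two (t : ℝ) : ∀ᵐ x : ℝ, x ≠ t ∧ x ≠ -t := by
  have hsub : {x : ℝ | ¬(x ≠ t ∧ x ≠ -t)} ⊆ {t} ∪ {-t} := by
    intro x hx
    simp only [mem_setOf_eq, not_and_or, not_not] at hx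
    rcases hx with h | h
    · exact Or.inl h
    · exact Or.inr h
  refine ae_iff.2 (measure_mono_null hsub ?_)
  exact measure_union_null (Real.volume_singleton) (Real.volume_singleton)


theorem stmt_18' {Ω : Type*} [MeasureSpace Ω] [IsProbabilityMeasure (ℙ : Measure Ω)]
    (t : ℝ) (ht : 0 < t) :
    (∀ k : ℕ, 1 ≤ k → ∀ U : Ω → Fin (2 * k) → ℝ, Measurable U →
      Measure.map U ℙ = dirichletLaw (2 * k) t →
      Measure.map (fun ω => altSum (2 * k) U ω + t) ℙ =
        (volume : Measure ℝ).withDensity fun x =>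
          ENNReal.ofReal (if x ∈ Set.Icc (-t) t then
            ((2 * k - 1).factorial : ℝ) / (2 ^ (2 * k - 1) * ((k - 1).factorial : ℝ) ^ 2) *
              ((t + x) ^ k * (t - x) ^ (k - 1) / t ^ (2 * k)) else 0)) ∧
    (∀ k : ℕ, ∀ U : Ω → Fin (2 * k + 1) → ℝ, Measurable U →
      Measure.map U ℙ = dirichletLaw (2 * k + 1) t →
      Measure.map (fun ω => altSum (2 * k + 1) U ω - t) ℙ =
        (volume : Measure ℝ).withDensity fun x =>
          ENNReal.ofReal (if x ∈ Set.Icc (-t) t then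
            ((2 * k + 1).factorial : ℝ) / (2 ^ (2 * k + 1) * (k.factorial : ℝ) ^ 2) *
              ((t + x) ^ k * (t - x) ^ k / t ^ (2 * k + 1)) else 0)) := by
  have ht' : t ≠ 0 := ne_of_gt ht
  constructor
  · intro k hk U hU hlaw
    obtain ⟨j, rfl⟩ : ∃ j, k = j + 1 := ⟨k - 1, (Nat.succ_pred_eq_of_pos hk).symm⟩
    refine final_aux (2*(j+1)) t ht t (evenDen (j+1) t) (measurable_evenDen (j+1) t)
      (fun f hf => (core j).2 t ht f hf) _ ?_ U hU hlaw
    filter_upwards [ae_ne_two t] with x hx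
    have hc0 : (0:ℝ) ≤ ((2*(j+1)).factorial : ℝ) / t ^ (2*(j+1)) :=
      div_nonneg (Nat.cast_nonneg _) (pow_nonneg ht.le _)
    rw [← ENNReal.ofReal_mul (by norm_num : (0:ℝ) ≤ 1/2), ← ENNReal.ofReal_mul hc0]
    congr 1
    by_cases hx1 : -t < x ∧ x < t
    · unfold evenDen
      rw [if_pos (show -t < (x - t)/2 ∧ (x - t)/2 < 0 from
        ⟨by linarith [hx1.1], by linarith [hx1.2]⟩)]
      rw [if_pos (show x ∈ Icc (-t) t from ⟨le_of_lt hx1.1, le_of_lt hx1.2⟩)]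
      have e2 : (j + 1) - 1 = j := by omega
      have e1 : 2*(j+1)-1 = 2*j+1 := by omega
      rw [e1, e2]
      have hfac1 : ((2*(j+1)).factorial : ℝ) = (2*(j+1)) * ((2*j+1).factorial) := by
        rw [show 2*(j+1) = (2*j+1)+1 by ring]
        exact_mod_cast Nat.factorial_succ _
      have hfac2 : ((j+1).factorial : ℝ) = (j+1) * j.factorial := by
        exact_mod_cast Nat.factorial_succ _
      have e3 : -((x - t)/2) = (t - x)/2 := by ring
      have e4 : t + (x - t)/2 = (t + x)/2 := by ring
      rw [e3, e4, div_pow, div_pow, hfac1, hfac2]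
      have h2 : (j.factorial : ℝ) ≠ 0 := Nat.cast_ne_zero.2 (Nat.factorial_ne_zero j)
      have h3 : ((j : ℝ) + 1) ≠ 0 := by positivity
      push_cast
      field_simp
      ring_nf
      try exact Or.inl trivial
    · unfold evenDen
      rw [if_neg (show ¬(-t < (x - t)/2 ∧ (x - t)/2 < 0) from
        fun hcnd => hx1 ⟨by linarith [hcnd.1], by linarith [hcnd.2]⟩)]
      rw [if_neg (show x ∉ Icc (-t) t from fun hcnd =>
        hx1 ⟨lt_of_le_of_ne hcnd.1 (Ne.symm hx.2), lt_of_le_of_ne hcnd.2 hx.1⟩)]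
      ring
  · intro k U hU hlaw
    have heq : (fun ω => altSum (2*k+1) U ω - t) = (fun ω => altSum (2*k+1) U ω + (-t)) := by
      funext ω; ring
    rw [heq]
    refine final_aux (2*k+1) t ht (-t) (oddDen k t) (measurable_oddDen k t)
      (fun f hf => (core k).1 t ht f hf) _ ?_ U hU hlaw
    filter_upwards [ae_ne_two t] with x hx
    have hc0 : (0:ℝ) ≤ ((2*k+1).factorial : ℝ) / t ^ (2*k+1) :=
      div_nonneg (Nat.cast_nonneg _) (pow_nonneg ht.le _)
    rw [← ENNReal.ofReal_mul (by norm_num : (0:ℝ) ≤ 1/2), ← ENNReal.ofReal_mul hc0]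
    congr 1
    have e0 : (x - -t)/2 = (x + t)/2 := by ring
    by_cases hx1 : -t < x ∧ x < t
    · unfold oddDen
      rw [e0]
      rw [if_pos (show 0 < (x + t)/2 ∧ (x + t)/2 < t from
        ⟨by linarith [hx1.1], by linarith [hx1.2]⟩)]
      rw [if_pos (show x ∈ Icc (-t) t from ⟨le_of_lt hx1.1, le_of_lt hx1.2⟩)]
      have e3 : t - (x + t)/2 = (t - x)/2 := by ring
      have e4 : (x + t)/2 = (t + x)/2 := by ring
      rw [e3, e4, div_pow, div_pow]
      have h2 : (k.factorial : ℝ) ≠ 0 := Nat.cast_ne_zero.2 (Nat.factorial_ne_zero k)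
      push_cast
      field_simp
      ring_nf
      try exact Or.inl trivial
    · unfold oddDen
      rw [e0]
      rw [if_neg (show ¬(0 < (x + t)/2 ∧ (x + t)/2 < t) from
        fun hcnd => hx1 ⟨by linarith [hcnd.1], by linarith [hcnd.2]⟩)]
      rw [if_neg (show x ∉ Icc (-t) t from fun hcnd =>
        hx1 ⟨lt_of_le_of_ne hcnd.1 (Ne.symm hx.2), lt_of_le_of_ne hcnd.2 hx.1⟩)]
      ring

end DirichletAux

theorem stmt_18 {Ω : Type*} [MeasureSpace Ω] [IsProbabilityMeasure (ℙ : Measure Ω)]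
    (t : ℝ) (ht : 0 < t) :
    (∀ k : ℕ, 1 ≤ k → ∀ U : Ω → Fin (2 * k) → ℝ, Measurable U →
      Measure.map U ℙ = dirichletLaw (2 * k) t →
      Measure.map (fun ω => altSum (2 * k) U ω + t) ℙ =
        (volume : Measure ℝ).withDensity fun x =>
          ENNReal.ofReal (if x ∈ Set.Icc (-t) t then
            ((2 * k - 1).factorial : ℝ) / (2 ^ (2 * k - 1) * ((k - 1).factorial : ℝ) ^ 2) *
              ((t + x) ^ k * (t - x) ^ (k - 1) / t ^ (2 * k)) else 0)) ∧
    (∀ k : ℕ, ∀ U : Ω → Fin (2 * k + 1) → ℝ, Measurable U →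
      Measure.map U ℙ = dirichletLaw (2 * k + 1) t →
      Measure.map (fun ω => altSum (2 * k + 1) U ω - t) ℙ =
        (volume : Measure ℝ).withDensity fun x =>
          ENNReal.ofReal (if x ∈ Set.Icc (-t) t then
            ((2 * k + 1).factorial : ℝ) / (2 ^ (2 * k + 1) * (k.factorial : ℝ) ^ 2) *
              ((t + x) ^ k * (t - x) ^ k / t ^ (2 * k + 1)) else 0)) := DirichletAux.stmt_18' t ht
end
end

section
/- Fix $\alpha_0,\beta_0\in[0,1]$ with $\alpha_0+\beta_0\ne0$, $\rho_0=1-\alpha_0-\beta_0$, $\eta_0=\beta_0-\alpha_0$, $c_0,c_1\in\mathbb{R}$, and real $\mu$. Setting $\lambda=e^{-\mu\Delta}$, $\alpha=\alpha_0+c_0\Delta$, $\beta=\beta_0+c_1\Delta$, the larger root $\theta_+$ of $\theta^2-(\frac{1-\alpha}{\lambda}+(1-\beta)\lambda)\theta+(1-\alpha-\beta)=0$ admits the asymptotic expansion $\theta_+=1+\Delta\frac{\mu\eta_0}{1-\rho_0}+\Delta^2\Big[\frac{\mu^2}{2}\Big(\frac{1+\rho_0}{1-\rho_0}-\frac{2\eta_0^2\rho_0}{(1-\rho_0)^3}\Big)+\mu\Big(\frac{c_1-c_0}{1-\rho_0}-\frac{\eta_0(c_0+c_1)}{(1-\rho_0)^2}\Big)\Big]+o(\Delta^2)$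 as $\Delta\to0^+$. -/
open Real Filter Asymptotics

noncomputable section
set_option maxHeartbeats 1000000

private lemma cube_littleO : (fun Δ : ℝ => Δ ^ 3) =o[nhds (0:ℝ)] fun Δ => Δ ^ 2 :=
  isLittleO_pow_pow (by norm_num)

private lemma exp_taylor2 (c : ℝ) :
    (fun Δ : ℝ => Real.exp (c * Δ) - (1 + c * Δ + c ^ 2 * Δ ^ 2 / 2)) =o[nhds 0]
      fun Δ : ℝ => Δ ^ 2 := by
  have hc : Filter.Tendsto (fun Δ : ℝ => c * Δ) (nhds 0) (nhds 0) := by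
    exact (continuous_const.mul continuous_id).tendsto' (0:ℝ) 0 (by simp)
  have h := (Real.exp_sub_sum_range_succ_isLittleO_pow 2).comp_tendsto hc
  simp only [Function.comp_def, Finset.sum_range_succ, Finset.sum_range_zero] at h
  have h2 : (fun Δ : ℝ => (c * Δ) ^ 2) =O[nhds (0:ℝ)] fun Δ => Δ ^ 2 := by
    simpa [mul_pow] using (isBigO_refl (fun Δ : ℝ => Δ ^ 2) (nhds 0)).const_mul_left (c ^ 2)
  refine (h.trans_isBigO h2).congr (fun Δ => ?_) (fun _ => rfl)
  norm_num
  ring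

theorem stmt_19 (α₀ β₀ : ℝ) (hα₀ : 0 ≤ α₀) (hα₀1 : α₀ ≤ 1) (hβ₀ : 0 ≤ β₀) (hβ₀1 : β₀ ≤ 1)
    (hne : α₀ + β₀ ≠ 0)
    (ρ₀ η₀ : ℝ) (hρ₀ : ρ₀ = 1 - α₀ - β₀) (hη₀ : η₀ = β₀ - α₀)
    (c₀ c₁ μ : ℝ)
    (lam α β : ℝ → ℝ)
    (hlam : ∀ Δ, lam Δ = Real.exp (-μ * Δ))
    (hα : ∀ Δ, α Δ = α₀ + c₀ * Δ) (hβ : ∀ Δ, β Δ = β₀ + c₁ * Δ)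
    (D : ℝ → ℝ)
    (hD : ∀ Δ, D Δ = ((1 - α Δ) / lam Δ + (1 - β Δ) * lam Δ) ^ 2 - 4 * (1 - α Δ - β Δ))
    (θp : ℝ → ℝ)
    (hθp : ∀ Δ, θp Δ =
      (1 / 2) * ((1 - α Δ) / lam Δ + (1 - β Δ) * lam Δ + Real.sqrt (D Δ))) :
    (fun Δ => θp Δ -
        (1 + Δ * (μ * η₀ / (1 - ρ₀)) +
          Δ ^ 2 * ((μ ^ 2 / 2) * ((1 + ρ₀) / (1 - ρ₀) - 2 * η₀ ^ 2 * ρ₀ / (1 - ρ₀) ^ 3) +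
            μ * ((c₁ - c₀) / (1 - ρ₀) - η₀ * (c₀ + c₁) / (1 - ρ₀) ^ 2))))
      =o[nhdsWithin (0 : ℝ) (Set.Ioi 0)] fun Δ => Δ ^ 2 := by
  subst hρ₀ hη₀
  have hr : (0:ℝ) < α₀ + β₀ := lt_of_le_of_ne (by linarith) (Ne.symm hne)
  -- the symbol S
  obtain ⟨S, hSdef⟩ : ∃ S : ℝ → ℝ, S = fun Δ =>
    (1 - α₀ - c₀ * Δ) * Real.exp (μ * Δ) + (1 - β₀ - c₁ * Δ) * Real.exp (-μ * Δ) := ⟨_, rfl⟩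
  have key1 : ∀ Δ, (1 - α Δ) / lam Δ + (1 - β Δ) * lam Δ = S Δ := by
    intro Δ
    have hx : Real.exp (-μ * Δ) = (Real.exp (μ * Δ))⁻¹ := by
      rw [neg_mul, Real.exp_neg]
    rw [hα, hβ, hlam, hSdef]
    simp only [hx, div_eq_mul_inv, inv_inv]
    ring
  have hD' : ∀ Δ, D Δ = S Δ ^ 2 - 4 * (1 - α₀ - β₀ - (c₀ + c₁) * Δ) := by
    intro Δ
    rw [hD, key1, hα, hβ]
    ring
  -- Taylor polynomial of S
  obtain ⟨s1, hs1⟩ : ∃ x : ℝ, x = μ * (β₀ - α₀) - (c₀ + c₁) := ⟨_, rfl⟩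
  obtain ⟨s2, hs2⟩ : ∃ x : ℝ, x = μ ^ 2 * (2 - α₀ - β₀) / 2 + μ * (c₁ - c₀) := ⟨_, rfl⟩
  obtain ⟨SP, hSP⟩ : ∃ x : ℝ → ℝ, x = fun Δ => (2 - α₀ - β₀) + s1 * Δ + s2 * Δ ^ 2 := ⟨_, rfl⟩
  have hS : (fun Δ => S Δ - SP Δ) =o[nhds (0:ℝ)] fun Δ => Δ ^ 2 := by
    have hO1 : (fun Δ : ℝ => 1 - α₀ - c₀ * Δ) =O[nhds (0:ℝ)] (fun _ => (1:ℝ)) :=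
      Filter.Tendsto.isBigO_one ℝ
        ((continuous_const.sub (continuous_const.mul continuous_id)).tendsto (0:ℝ))
    have hO2 : (fun Δ : ℝ => 1 - β₀ - c₁ * Δ) =O[nhds (0:ℝ)] (fun _ => (1:ℝ)) :=
      Filter.Tendsto.isBigO_one ℝ
        ((continuous_const.sub (continuous_const.mul continuous_id)).tendsto (0:ℝ))
    have t1 := hO1.mul_isLittleO (exp_taylor2 μ)
    have t2 := hO2.mul_isLittleO (exp_taylor2 (-μ))
    have t3 := (cube_littleO.const_mul_left (-((c₀ + c₁) * μ ^ 2 / 2))).congr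
      (fun _ => rfl) (fun x : ℝ => (one_mul (x ^ 2)).symm)
    have := (t1.add t2).add t3
    refine this.congr (fun Δ => ?_) (fun Δ => by ring)
    simp only [hSdef, hSP, hs1, hs2]
    ring
  -- approximating polynomial of sqrt D
  obtain ⟨d1, hd1⟩ : ∃ x : ℝ, x = 2 * (2 - α₀ - β₀) * s1 + 4 * (c₀ + c₁) := ⟨_, rfl⟩
  obtain ⟨d2, hd2⟩ : ∃ x : ℝ, x = 2 * (2 - α₀ - β₀) * s2 + s1 ^ 2 := ⟨_, rfl⟩
  obtain ⟨q1, hq1⟩ : ∃ x : ℝ, x = d1 / (2 * (α₀ + β₀)) := ⟨_, rfl⟩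
  obtain ⟨q2, hq2⟩ : ∃ x : ℝ, x = (d2 - q1 ^ 2) / (2 * (α₀ + β₀)) := ⟨_, rfl⟩
  obtain ⟨Q, hQdef⟩ : ∃ x : ℝ → ℝ, x = fun Δ => (α₀ + β₀) + q1 * Δ + q2 * Δ ^ 2 := ⟨_, rfl⟩
  -- continuity facts
  have hScont : Continuous S := by
    rw [hSdef]; fun_prop
  have hS0 : S 0 = 2 - α₀ - β₀ := by simp [hSdef]; ring
  have hDc : Filter.Tendsto D (nhds 0) (nhds ((α₀ + β₀) ^ 2)) := by
    have hcont2 : Continuous fun Δ : ℝ => S Δ ^ 2 - 4 * (1 - α₀ - β₀ - (c₀ + c₁) * Δ) := by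
      fun_prop
    have h := hcont2.tendsto 0
    simp only [hS0, mul_zero, sub_zero] at h
    rw [show (2 - α₀ - β₀) ^ 2 - 4 * (1 - α₀ - β₀) = (α₀ + β₀) ^ 2 by ring] at h
    exact h.congr (fun Δ => (hD' Δ).symm)
  have hQcont : Continuous Q := by rw [hQdef]; fun_prop
  have hQ0 : Q 0 = α₀ + β₀ := by simp [hQdef]
  have hsqc : Filter.Tendsto (fun Δ => Real.sqrt (D Δ)) (nhds 0) (nhds (α₀ + β₀)) := by
    have := (Real.continuous_sqrt.tendsto ((α₀ + β₀) ^ 2)).comp hDc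
    simpa [Function.comp_def, Real.sqrt_sq hr.le] using this
  have hden : Filter.Tendsto (fun Δ => Real.sqrt (D Δ) + Q Δ) (nhds 0)
      (nhds (2 * (α₀ + β₀))) := by
    simpa [two_mul] using hsqc.add (hQcont.tendsto' 0 _ hQ0)
  -- numerator is little-o
  have hDQ : (fun Δ => D Δ - Q Δ ^ 2) =o[nhds (0:ℝ)] fun Δ => Δ ^ 2 := by
    have hA : (fun Δ => (S Δ - SP Δ) * (S Δ + SP Δ)) =o[nhds (0:ℝ)] fun Δ => Δ ^ 2 := by
      have hsum : (fun Δ => S Δ + SP Δ) =O[nhds (0:ℝ)] (fun _ => (1:ℝ)) :=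
        Filter.Tendsto.isBigO_one ℝ ((hScont.add (by rw [hSP]; fun_prop)).tendsto (0:ℝ))
      simpa using hS.mul_isBigO hsum
    have hB : (fun Δ : ℝ => SP Δ ^ 2 - 4 * (1 - α₀ - β₀ - (c₀ + c₁) * Δ) - Q Δ ^ 2)
        =o[nhds (0:ℝ)] fun Δ => Δ ^ 2 := by
      have hOc : (fun Δ : ℝ => 2 * s1 * s2 - 2 * q1 * q2 + Δ * (s2 ^ 2 - q2 ^ 2))
          =O[nhds (0:ℝ)] (fun _ => (1:ℝ)) :=
        Filter.Tendsto.isBigO_one ℝ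
          ((continuous_const.add (continuous_id.mul continuous_const)).tendsto (0:ℝ))
      have := cube_littleO.mul_isBigO hOc
      refine this.congr (fun Δ => ?_) (fun Δ => by ring)
      have e1 : 2 * (α₀ + β₀) * q1 = 2 * (2 - α₀ - β₀) * s1 + 4 * (c₀ + c₁) := by
        rw [hq1, hd1]; field_simp
      have e2 : 2 * (α₀ + β₀) * q2 = 2 * (2 - α₀ - β₀) * s2 + s1 ^ 2 - q1 ^ 2 := by
        rw [hq2, hd2]; field_simp
      simp only [hQdef, hSP]
      linear_combination Δ * e1 + Δ ^ 2 * e2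
    have := hA.add hB
    refine this.congr (fun Δ => ?_) (fun Δ => by ring)
    rw [hD']
    ring
  -- sqrt D - Q is little-o
  have hsq : (fun Δ => Real.sqrt (D Δ) - Q Δ) =o[nhds (0:ℝ)] fun Δ => Δ ^ 2 := by
    have hDpos : ∀ᶠ Δ : ℝ in nhds 0, 0 < D Δ :=
      hDc.eventually_const_lt (by positivity)
    have hdenpos : ∀ᶠ Δ : ℝ in nhds 0, 0 < Real.sqrt (D Δ) + Q Δ :=
      hden.eventually_const_lt (by positivity)
    have hinv : (fun Δ => (Real.sqrt (D Δ) + Q Δ)⁻¹) =O[nhds (0:ℝ)] (fun _ => (1:ℝ)) :=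
      Filter.Tendsto.isBigO_one ℝ (hden.inv₀ (by positivity))
    have heq : ∀ᶠ Δ : ℝ in nhds 0,
        (D Δ - Q Δ ^ 2) * (Real.sqrt (D Δ) + Q Δ)⁻¹ = Real.sqrt (D Δ) - Q Δ := by
      filter_upwards [hDpos, hdenpos] with Δ h1 h2
      have hsq2 : Real.sqrt (D Δ) ^ 2 = D Δ := Real.sq_sqrt h1.le
      rw [mul_inv_eq_iff_eq_mul₀ h2.ne']
      linear_combination -hsq2
    have := hDQ.mul_isBigO hinv
    refine (this.congr' heq (Filter.Eventually.of_forall fun Δ => by ring)).mono le_rfl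
  -- assemble
  have main : (fun Δ => θp Δ -
      (1 + Δ * (μ * (β₀ - α₀) / (1 - (1 - α₀ - β₀))) +
        Δ ^ 2 * ((μ ^ 2 / 2) * ((1 + (1 - α₀ - β₀)) / (1 - (1 - α₀ - β₀)) -
            2 * (β₀ - α₀) ^ 2 * (1 - α₀ - β₀) / (1 - (1 - α₀ - β₀)) ^ 3) +
          μ * ((c₁ - c₀) / (1 - (1 - α₀ - β₀)) -
            (β₀ - α₀) * (c₀ + c₁) / (1 - (1 - α₀ - β₀)) ^ 2))))
      =o[nhds (0:ℝ)] fun Δ => Δ ^ 2 := by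
    have hid : ∀ Δ : ℝ, (SP Δ + Q Δ) / 2 =
        1 + Δ * (μ * (β₀ - α₀) / (1 - (1 - α₀ - β₀))) +
        Δ ^ 2 * ((μ ^ 2 / 2) * ((1 + (1 - α₀ - β₀)) / (1 - (1 - α₀ - β₀)) -
            2 * (β₀ - α₀) ^ 2 * (1 - α₀ - β₀) / (1 - (1 - α₀ - β₀)) ^ 3) +
          μ * ((c₁ - c₀) / (1 - (1 - α₀ - β₀)) -
            (β₀ - α₀) * (c₀ + c₁) / (1 - (1 - α₀ - β₀)) ^ 2)) := by
      intro Δ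
      have hA : (1:ℝ) - (1 - α₀ - β₀) ≠ 0 := by
        rw [show (1:ℝ) - (1 - α₀ - β₀) = α₀ + β₀ by ring]; exact hr.ne'
      have q1v : q1 = ((2 - α₀ - β₀) * s1 + 2 * (c₀ + c₁)) / (α₀ + β₀) := by
        rw [hq1, hd1]; field_simp; ring
      have q2v : q2 = ((α₀ + β₀) ^ 2 * (2 * (2 - α₀ - β₀) * s2 + s1 ^ 2) -
          ((2 - α₀ - β₀) * s1 + 2 * (c₀ + c₁)) ^ 2) / (2 * (α₀ + β₀) ^ 3) := by
        rw [hq2, hd2, q1v]; field_simp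
      rw [show (1:ℝ) - (1 - α₀ - β₀) = α₀ + β₀ from by ring]
      simp only [hQdef, hSP]
      rw [q1v, q2v, hs1, hs2]
      field_simp
      ring
    have := (hS.const_mul_left (1/2 : ℝ)).add (hsq.const_mul_left (1/2 : ℝ))
    refine this.congr (fun Δ => ?_) (fun Δ => by ring)
    rw [← hid Δ, hθp, key1]
    ring
  exact main.mono nhdsWithin_le_nhds
end
end
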